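/- Let ξ₁, ξ₂, p, q be positive reals and η real with η > -1, and let f be the extended beta density f(y) = y^{ξ₁-1} (1-y)^{ξ₂-1} S_η(-p/y) S_η(-q/(1-y)) / B_η^{p,q}(ξ₁,ξ₂) on (0,1). Then for every real t, the moment generating function of this distribution satisfies M_X(t) = ∫₀¹ e^{ty} f(y) dy = (1 / B_η^{p,q}(ξ₁,ξ₂)) Σ_{n=0}^∞ B_η^{p,q}(ξ₁+n, ξ₂) t^n / n!. -/

import Mathlib

open MeasureTheory Complex
open scoped NNReal ENNReal

/-- The Bessel–Struve kernel function, defined by its power series. -/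
noncomputable def besselStruve (η t : ℂ) : ℂ :=
  (Complex.Gamma (η + 1) / (Real.sqrt Real.pi : ℂ)) *
    ∑' m : ℕ, t ^ m * Complex.Gamma (((m : ℂ) + 1) / 2) /
      ((m.factorial : ℂ) * Complex.Gamma ((m : ℂ) / 2 + η + 1))

/-- The extended beta function `B_η^{p,q}(ξ₁, ξ₂)`. -/
noncomputable def extBeta (η p q ξ₁ ξ₂ : ℂ) : ℂ :=
  ∫ y in (0:ℝ)..1, (y : ℂ) ^ (ξ₁ - 1) * ((1 : ℂ) - (y : ℂ)) ^ (ξ₂ - 1) *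
    besselStruve η (-p / (y : ℂ)) * besselStruve η (-q / (1 - (y : ℂ)))

/-- The Pochhammer symbol `(a)_l = Γ(a + l)/Γ(a)`. -/
noncomputable def poch (a : ℂ) (l : ℕ) : ℂ := Complex.Gamma (a + l) / Complex.Gamma a

/-- The extended Gauss hypergeometric function `F_η^{p,q}(ξ₁, ξ₂; ξ₃; x)`. -/
noncomputable def extF (η p q ξ₁ ξ₂ ξ₃ x : ℂ) : ℂ :=
  ∑' l : ℕ, poch ξ₁ l * extBeta η p q (ξ₂ + l) (ξ₃ - ξ₂) * x ^ l /
    (Complex.betaIntegral ξ₂ (ξ₃ - ξ₂) * (l.factorial : ℂ))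

/-- The extended confluent hypergeometric function `Φ_η^{p,q}(ξ₂; ξ₃; x)`. -/
noncomputable def extPhi (η p q ξ₂ ξ₃ x : ℂ) : ℂ :=
  ∑' l : ℕ, extBeta η p q (ξ₂ + l) (ξ₃ - ξ₂) * x ^ l /
    (Complex.betaIntegral ξ₂ (ξ₃ - ξ₂) * (l.factorial : ℂ))

lemma mgf_aux (t : ℝ) (w : ℝ → ℂ) (hInt : IntegrableOn w (Set.Ioc 0 1)) :
    (∫ y in (0:ℝ)..1, Complex.exp ((t:ℂ) * (y:ℝ)) * w y)
      = ∑' n : ℕ, ((t:ℂ)^n / (n.factorial : ℂ)) * ∫ y in Set.Ioc (0:ℝ) 1, (y:ℂ)^n * w y := by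
  rw [intervalIntegral.integral_of_le zero_le_one]
  set F : ℕ → ℝ → ℂ := fun n y => ((t:ℂ)^n / (n.factorial : ℂ)) * ((y:ℂ)^n * w y) with hF
  have hmeas : ∀ n : ℕ, AEStronglyMeasurable (F n) (volume.restrict (Set.Ioc (0:ℝ) 1)) := by
    intro n
    exact aestronglyMeasurable_const.mul
      (((Complex.continuous_ofReal.pow n).aestronglyMeasurable).mul hInt.aestronglyMeasurable)
  have hI : (∫⁻ y in Set.Ioc (0:ℝ) 1, ‖w y‖₊) < ⊤ := hInt.2
  have hbound : ∀ n : ℕ, (∫⁻ y in Set.Ioc (0:ℝ) 1, ‖F n y‖₊)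
      ≤ ((‖t‖₊^n / (n.factorial : ℝ≥0) : ℝ≥0) : ENNReal) * ∫⁻ y in Set.Ioc (0:ℝ) 1, ‖w y‖₊ := by
    intro n
    rw [← MeasureTheory.lintegral_const_mul' _ _ ENNReal.coe_ne_top]
    refine lintegral_mono_ae ?_
    filter_upwards [ae_restrict_mem measurableSet_Ioc] with y hy
    have hy1 : |y| ≤ 1 := by
      rw [abs_of_pos hy.1]; exact hy.2
    have h1 : ‖F n y‖₊ = ‖(t:ℂ)^n / (n.factorial : ℂ)‖₊ * (‖(y:ℂ)^n‖₊ * ‖w y‖₊) := by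
      simp [hF, nnnorm_mul]
    have h2 : ‖(t:ℂ)^n / (n.factorial : ℂ)‖₊ = ‖t‖₊^n / (n.factorial : ℝ≥0) := by
      ext
      simp [norm_div, Complex.norm_natCast, NNReal.coe_div, NNReal.coe_pow]
    have h3 : ‖(y:ℂ)^n‖₊ ≤ 1 := by
      have : ‖(y:ℂ)‖₊ ≤ 1 := by
        rw [← NNReal.coe_le_coe]; simpa [Complex.norm_real] using hy1
      simpa [nnnorm_pow] using pow_le_one₀ zero_le this
    calc (‖F n y‖₊ : ENNReal) = (‖(t:ℂ)^n / (n.factorial : ℂ)‖₊ : ENNReal) * (‖(y:ℂ)^n‖₊ * ‖w y‖₊) := by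
          rw [h1]; push_cast; ring
      _ ≤ ((‖t‖₊^n / (n.factorial : ℝ≥0) : ℝ≥0) : ENNReal) * (1 * ‖w y‖₊) := by
          rw [h2]
          gcongr
          exact_mod_cast h3
      _ = ((‖t‖₊^n / (n.factorial : ℝ≥0) : ℝ≥0) : ENNReal) * ‖w y‖₊ := by rw [one_mul]
  have hsummable : Summable (fun n : ℕ => (‖t‖₊^n / (n.factorial : ℝ≥0) : ℝ≥0)) := by
    rw [← NNReal.summable_coe]
    have := Real.summable_pow_div_factorial ‖t‖
    simpa using this
  have hne : (∑' n : ℕ, ∫⁻ y in Set.Ioc (0:ℝ) 1, ‖F n y‖₊) ≠ ⊤ := by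
    refine ne_top_of_le_ne_top ?_ (ENNReal.tsum_le_tsum hbound)
    rw [ENNReal.tsum_mul_right]
    exact ENNReal.mul_ne_top (by rwa [ENNReal.tsum_coe_ne_top_iff_summable]) hI.ne
  have key : (∫ y in Set.Ioc (0:ℝ) 1, ∑' n : ℕ, F n y) = ∑' n : ℕ, ∫ y in Set.Ioc (0:ℝ) 1, F n y :=
    MeasureTheory.integral_tsum hmeas hne
  have hpt : ∀ y : ℝ, Complex.exp ((t:ℂ) * (y:ℝ)) * w y = ∑' n : ℕ, F n y := by
    intro y
    have hexp : Complex.exp ((t:ℂ) * (y:ℝ)) = ∑' n : ℕ, ((t:ℂ) * (y:ℝ))^n / (n.factorial : ℂ) := by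
      rw [Complex.exp_eq_exp_ℂ, NormedSpace.exp_eq_tsum_div]
    rw [hexp, ← tsum_mul_right]
    refine tsum_congr fun n => ?_
    simp only [hF, mul_pow]
    ring
  calc (∫ y in Set.Ioc (0:ℝ) 1, Complex.exp ((t:ℂ) * (y:ℝ)) * w y)
      = ∫ y in Set.Ioc (0:ℝ) 1, ∑' n : ℕ, F n y := by
        exact setIntegral_congr_fun measurableSet_Ioc fun y _ => hpt y
    _ = ∑' n : ℕ, ∫ y in Set.Ioc (0:ℝ) 1, F n y := key
    _ = ∑' n : ℕ, ((t:ℂ)^n / (n.factorial : ℂ)) * ∫ y in Set.Ioc (0:ℝ) 1, (y:ℂ)^n * w y := by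
        refine tsum_congr fun n => ?_
        rw [integral_const_mul]

theorem extBeta_mgf (ξ₁ ξ₂ p q η : ℝ)
    (h1 : 0 < ξ₁) (h2 : 0 < ξ₂) (hp : 0 < p) (hq : 0 < q) (hη : -1 < η) (t : ℝ) :
    (∫ y in (0:ℝ)..1, Complex.exp ((t : ℂ) * (y : ℂ)) *
        ((y : ℂ) ^ ((ξ₁ : ℂ) - 1) * ((1 : ℂ) - (y : ℂ)) ^ ((ξ₂ : ℂ) - 1) *
          besselStruve (η : ℂ) (-(p : ℂ) / (y : ℂ)) *
          besselStruve (η : ℂ) (-(q : ℂ) / (1 - (y : ℂ))) /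
          extBeta (η : ℂ) (p : ℂ) (q : ℂ) (ξ₁ : ℂ) (ξ₂ : ℂ))) =
      (1 / extBeta (η : ℂ) (p : ℂ) (q : ℂ) (ξ₁ : ℂ) (ξ₂ : ℂ)) *
        ∑' n : ℕ, extBeta (η : ℂ) (p : ℂ) (q : ℂ) ((ξ₁ : ℂ) + n) (ξ₂ : ℂ) *
          (t : ℂ) ^ n / (n.factorial : ℂ) := by
  set w : ℝ → ℂ := fun y : ℝ => (y:ℂ) ^ ((ξ₁:ℂ) - 1) * ((1:ℂ) - (y:ℂ)) ^ ((ξ₂:ℂ) - 1) *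
      besselStruve (η:ℂ) (-(p:ℂ) / (y:ℂ)) * besselStruve (η:ℂ) (-(q:ℂ) / (1 - (y:ℂ))) with hw
  rcases eq_or_ne (extBeta (η:ℂ) (p:ℂ) (q:ℂ) (ξ₁:ℂ) (ξ₂:ℂ)) 0 with h0 | h0
  · simp [h0]
  · have hInt : IntegrableOn w (Set.Ioc 0 1) := by
      by_contra hc
      apply h0
      rw [extBeta]
      apply intervalIntegral.integral_undef
      rw [intervalIntegrable_iff_integrableOn_Ioc_of_le zero_le_one]
      exact hc
    have hmain : (∫ y in (0:ℝ)..1, Complex.exp ((t:ℂ) * (y:ℝ)) * w y)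
        = ∑' n : ℕ, ((t:ℂ)^n / (n.factorial : ℂ)) * ∫ y in Set.Ioc (0:ℝ) 1, (y:ℂ)^n * w y :=
      mgf_aux t w hInt
    have hBn : ∀ n : ℕ, extBeta (η:ℂ) (p:ℂ) (q:ℂ) ((ξ₁:ℂ) + n) (ξ₂:ℂ)
        = ∫ y in Set.Ioc (0:ℝ) 1, (y:ℂ)^n * w y := by
      intro n
      rw [extBeta, intervalIntegral.integral_of_le zero_le_one]
      refine setIntegral_congr_fun measurableSet_Ioc fun y hy => ?_
      have hy0 : (y:ℂ) ≠ 0 := by exact_mod_cast hy.1.ne'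
      rw [show ((ξ₁:ℂ) + n) - 1 = ((ξ₁:ℂ) - 1) + n by ring,
        Complex.cpow_add _ _ hy0, Complex.cpow_natCast, hw]
      ring
    calc (∫ y in (0:ℝ)..1, Complex.exp ((t:ℂ) * (y:ℂ)) *
          (w y / extBeta (η:ℂ) (p:ℂ) (q:ℂ) (ξ₁:ℂ) (ξ₂:ℂ)))
        = (∫ y in (0:ℝ)..1, Complex.exp ((t:ℂ) * (y:ℂ)) * w y) /
            extBeta (η:ℂ) (p:ℂ) (q:ℂ) (ξ₁:ℂ) (ξ₂:ℂ) := by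
          rw [← intervalIntegral.integral_div]
          exact intervalIntegral.integral_congr fun y _ => (mul_div_assoc _ _ _).symm
      _ = (∑' n : ℕ, ((t:ℂ)^n / (n.factorial : ℂ)) * ∫ y in Set.Ioc (0:ℝ) 1, (y:ℂ)^n * w y) /
            extBeta (η:ℂ) (p:ℂ) (q:ℂ) (ξ₁:ℂ) (ξ₂:ℂ) := by rw [hmain]
      _ = (1 / extBeta (η:ℂ) (p:ℂ) (q:ℂ) (ξ₁:ℂ) (ξ₂:ℂ)) *
            ∑' n : ℕ, extBeta (η:ℂ) (p:ℂ) (q:ℂ) ((ξ₁:ℂ) + n) (ξ₂:ℂ) * (t:ℂ)^n / (n.factorial : ℂ) := by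
          rw [one_div, div_eq_mul_inv, mul_comm]
          congr 1
          refine tsum_congr fun n => ?_
          rw [hBn n]
          ring
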